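/- For all a ∈ F_{3^n}^×, the order of the elliptic curve E: y² = x³ + x² − a over F_{3^n} is divisible by 3; equivalently the Kloosterman sum satisfies K_{3^n}(a) ≡ 0 (mod 3). -/

import Mathlib

open WeierstrassCurve

/-- The curve `y² = x³ + x² - a` over a field. -/
noncomputable def E3 {F : Type*} [Field F] (a : F) : WeierstrassCurve.Affine F :=
  { a₁ := 0, a₂ := 1, a₃ := 0, a₄ := 0, a₆ := -a }

open scoped Classical in
/-- The Kloosterman sum `K_{3^n}(a) = 1 + ∑_{x ∈ 𝔽_{3^n}^×} ζ^{Tr(x⁻¹ + ax)}`. -/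
noncomputable def Kl3 (n : ℕ) (ζ : ℂ) (a : GaloisField 3 n) : ℂ :=
  letI : Fintype (GaloisField 3 n) := Fintype.ofFinite _
  1 + ∑ x ∈ Finset.univ \ {(0 : GaloisField 3 n)},
    ζ ^ (Algebra.trace (ZMod 3) (GaloisField 3 n) (x⁻¹ + a * x)).val

section Aux

variable {F : Type*} [Field F] [CharP F 3] [DecidableEq F]

lemma E3_nonsingular {a : F} (ha : a ≠ 0) {c : F} (hc : c ^ 3 = a) :
    (E3 a).Nonsingular c c := by
  have h3 : (3 : F) = 0 := by exact_mod_cast CharP.cast_eq_zero F 3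
  have hc0 : c ≠ 0 := fun h => ha (by rw [← hc, h]; ring)
  rw [WeierstrassCurve.Affine.nonsingular_iff]
  refine ⟨?_, Or.inl ?_⟩
  · rw [WeierstrassCurve.Affine.equation_iff]
    show c ^ 2 + 0 * c * c + 0 * c = c ^ 3 + 1 * c ^ 2 + 0 * c + -a
    rw [hc]; ring
  · show (0 : F) * c ≠ 3 * c ^ 2 + 2 * 1 * c + 0
    intro h
    apply hc0
    have : (2 : F) ≠ 0 := by
      intro h2
      have : (1 : F) = 0 := by linear_combination h3 - h2
      exact one_ne_zero this
    have h2c : (2 : F) * c = 0 := by linear_combination -h - c ^ 2 * h3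
    exact (mul_eq_zero.mp h2c).resolve_left this

lemma E3_negY (a x y : F) : (E3 a).negY x y = -y := by
  show -y - 0 * x - 0 = -y; ring

lemma E3_three_nsmul {a : F} (ha : a ≠ 0) {c : F} (hc : c ^ 3 = a) :
    (3 : ℕ) • (Affine.Point.some _ _ (E3_nonsingular ha hc)) = 0 := by
  have h3 : (3 : F) = 0 := by exact_mod_cast CharP.cast_eq_zero F 3
  have hc0 : c ≠ 0 := fun h => ha (by rw [← hc, h]; ring)
  have h2 : (2 : F) ≠ 0 := by
    intro h2
    have : (1 : F) = 0 := by linear_combination h3 - h2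
    exact one_ne_zero this
  set P := Affine.Point.some _ _ (E3_nonsingular ha hc) with hP
  have hy : c ≠ (E3 a).negY c c := by
    rw [E3_negY]
    intro h
    exact hc0 ((mul_eq_zero.mp (by linear_combination h : (2 : F) * c = 0)).resolve_left h2)
  have hslope : (E3 a).slope c c c c = 1 := by
    rw [WeierstrassCurve.Affine.slope_of_Y_ne rfl hy, E3_negY]
    show (3 * c ^ 2 + 2 * 1 * c + 0 - 0 * c) / (c - -c) = 1
    have hden : c - -c ≠ 0 := by
      intro h
      exact hc0 ((mul_eq_zero.mp (by linear_combination h : (2 : F) * c = 0)).resolve_left h2)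
    rw [div_eq_one_iff_eq hden]
    linear_combination c ^ 2 * h3
  have hx3 : (E3 a).addX c c ((E3 a).slope c c c c) = c := by
    rw [hslope]
    show (1 : F) ^ 2 + 0 * 1 - 1 - c - c = c
    linear_combination -c * h3
  have hy3 : (E3 a).addY c c c ((E3 a).slope c c c c) = -c := by
    rw [WeierstrassCurve.Affine.addY, WeierstrassCurve.Affine.negAddY, hx3, E3_negY]
    rw [hslope]; ring
  have hPP : P + P = Affine.Point.some _ _
      (WeierstrassCurve.Affine.nonsingular_add (E3_nonsingular ha hc)
        (E3_nonsingular ha hc) fun hxy => hy hxy.2) :=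
    WeierstrassCurve.Affine.Point.add_of_Y_ne hy
  have : P + P + P = 0 := by
    rw [hPP]
    exact WeierstrassCurve.Affine.Point.add_of_Y_eq hx3 (by rw [hy3, E3_negY])
  calc (3 : ℕ) • P = P + P + P := by abel
    _ = 0 := this

end Aux

/-- For all `a ∈ 𝔽_{3^n}ˣ`, the order of `E : y² = x³ + x² - a` over
`𝔽_{3^n}` is divisible by 3; equivalently `K_{3^n}(a) ≡ 0 (mod 3)`. -/
theorem curve_order_div_three (n : ℕ) (hn : 0 < n) (a : GaloisField 3 n) (ha : a ≠ 0)
    (ζ : ℂ) (hζ : IsPrimitiveRoot ζ 3)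
    (hcard : (Nat.card (E3 a).Point : ℂ) = (3 : ℂ) ^ n + Kl3 n ζ a) :
    3 ∣ Nat.card (E3 a).Point ∧ ∃ k : ℤ, Kl3 n ζ a = 3 * (k : ℂ) := by
  classical
  obtain ⟨c, hc⟩ := surjective_frobenius (GaloisField 3 n) 3 a
  rw [frobenius_def] at hc
  set P := Affine.Point.some _ _ (E3_nonsingular ha hc)
  have h3P : (3 : ℕ) • P = 0 := E3_three_nsmul ha hc
  have hord : addOrderOf P = 3 := by
    have hdvd : addOrderOf P ∣ 3 := addOrderOf_dvd_of_nsmul_eq_zero h3P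
    have hne1 : addOrderOf P ≠ 1 := by
      intro h
      rw [AddMonoid.addOrderOf_eq_one_iff] at h
      exact WeierstrassCurve.Affine.Point.some_ne_zero _ h
    rcases (Nat.prime_three.eq_one_or_self_of_dvd _ hdvd) with h | h
    · exact absurd h hne1
    · exact h
  have hdvd : 3 ∣ Nat.card (E3 a).Point := by
    have h := addOrderOf_dvd_natCard P
    rwa [hord] at h
  refine ⟨hdvd, ?_⟩
  obtain ⟨m, hm⟩ := hdvd
  refine ⟨(m : ℤ) - 3 ^ (n - 1), ?_⟩
  have h3n : (3 : ℂ) ^ n = 3 * 3 ^ (n - 1) := by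
    rw [← pow_succ' (3 : ℂ) (n - 1)]
    congr 1
    omega
  have : Kl3 n ζ a = (Nat.card (E3 a).Point : ℂ) - 3 ^ n := by
    rw [hcard]; ring
  rw [this, hm, h3n]
  push_cast
  ring
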